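/- Let M = [[A, B], [Bᵀ, C]] be a real positive semidefinite matrix of rank r where A, C are square and A, B are fixed. If rank(A) = r, then C is uniquely determined: C = Bᵀ A⁺ B; and every positive semidefinite matrix [[A, B], [Bᵀ, C']] of rank at most r has C' = Bᵀ A⁺ B. -/

import Mathlib

open Matrix

/-- `P` is the Moore–Penrose pseudoinverse of `A` (the four Penrose conditions). -/
def IsMPInv {m n : ℕ} (A : Matrix (Fin m) (Fin n) ℝ) (P : Matrix (Fin n) (Fin m) ℝ) : Prop :=
  A * P * A = A ∧ P * A * P = P ∧ (A * P)ᵀ = A * P ∧ (P * A)ᵀ = P * A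

section Aux

open Module Submodule LinearMap

private lemma range_prodMap' {R M M' N N' : Type*} [CommRing R] [AddCommGroup M] [AddCommGroup M']
    [AddCommGroup N] [AddCommGroup N'] [Module R M] [Module R M'] [Module R N] [Module R N']
    (f : M →ₗ[R] N) (g : M' →ₗ[R] N') :
    LinearMap.range (f.prodMap g) = (LinearMap.range f).prod (LinearMap.range g) := by
  ext ⟨a, b⟩
  constructor
  · rintro ⟨⟨x, y⟩, h⟩
    obtain ⟨h1, h2⟩ := Prod.ext_iff.mp h
    exact ⟨⟨x, h1⟩, ⟨y, h2⟩⟩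
  · rintro ⟨⟨x, hx⟩, ⟨y, hy⟩⟩
    exact ⟨(x, y), by simp [LinearMap.prodMap_apply, hx, hy]⟩

/-- The obvious equivalence between `P.prod Q` and `P × Q`. -/
private def prodSubEquiv {R M N : Type*} [CommRing R] [AddCommGroup M] [AddCommGroup N]
    [Module R M] [Module R N] (P : Submodule R M) (Q : Submodule R N) :
    (P.prod Q) ≃ₗ[R] P × Q where
  toFun v := (⟨v.1.1, v.2.1⟩, ⟨v.1.2, v.2.2⟩)
  map_add' _ _ := rfl
  map_smul' _ _ := rfl
  invFun x := ⟨(x.1.1, x.2.1), x.1.2, x.2.2⟩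
  left_inv _ := rfl
  right_inv _ := rfl

private lemma finrank_prod_sub {M N : Type*} [AddCommGroup M] [AddCommGroup N]
    [Module ℝ M] [Module ℝ N] [FiniteDimensional ℝ M] [FiniteDimensional ℝ N]
    (P : Submodule ℝ M) (Q : Submodule ℝ N) :
    Module.finrank ℝ (P.prod Q) = Module.finrank ℝ P + Module.finrank ℝ Q := by
  rw [(prodSubEquiv P Q).finrank_eq, Module.finrank_prod]

private lemma rank_fromBlocks_diag {p q : ℕ} (A : Matrix (Fin p) (Fin p) ℝ)
    (S : Matrix (Fin q) (Fin q) ℝ) :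
    (fromBlocks A 0 0 S).rank = A.rank + S.rank := by
  classical
  set e := LinearEquiv.sumArrowLequivProdArrow (Fin p) (Fin q) ℝ ℝ with he
  have hD : (fromBlocks A (0 : Matrix (Fin p) (Fin q) ℝ) 0 S).mulVecLin
      = e.symm.toLinearMap ∘ₗ ((A.mulVecLin.prodMap S.mulVecLin) ∘ₗ e.toLinearMap) := by
    apply LinearMap.ext; intro v
    funext i
    cases i with
    | inl i =>
      simp only [he, mulVecLin_apply, fromBlocks_mulVec, zero_mulVec, add_zero, zero_add,
        LinearMap.coe_comp, Function.comp_apply, LinearEquiv.coe_coe,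
        LinearMap.prodMap_apply, Sum.elim_inl]
      rfl
    | inr i =>
      simp only [he, mulVecLin_apply, fromBlocks_mulVec, zero_mulVec, add_zero, zero_add,
        LinearMap.coe_comp, Function.comp_apply, LinearEquiv.coe_coe,
        LinearMap.prodMap_apply, Sum.elim_inr]
      rfl
  rw [Matrix.rank, hD, LinearMap.range_comp, LinearMap.range_comp, LinearEquiv.range,
    Submodule.map_top, range_prodMap', LinearEquiv.finrank_map_eq, finrank_prod_sub]
  rfl

private lemma rank_eq_zero_imp {q : ℕ} {S : Matrix (Fin q) (Fin q) ℝ} (h : S.rank = 0) :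
    S = 0 := by
  rw [Matrix.rank, Submodule.finrank_eq_zero, LinearMap.range_eq_bot] at h
  ext i j
  have := congrFun (LinearMap.congr_fun h (Pi.single j 1)) i
  simpa [mulVecLin_apply, mulVec_single] using this

private lemma key {p q r : ℕ}
    (A : Matrix (Fin p) (Fin p) ℝ) (B : Matrix (Fin p) (Fin q) ℝ)
    (C' : Matrix (Fin q) (Fin q) ℝ)
    (Ap : Matrix (Fin p) (Fin p) ℝ) (hAp : IsMPInv A Ap)
    (hA : A.rank = r)
    (hPSD : (fromBlocks A B Bᵀ C').PosSemidef)
    (hM : (fromBlocks A B Bᵀ C').rank ≤ r) :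
    C' = Bᵀ * Ap * B := by
  classical
  obtain ⟨h1, h2, h3, h4⟩ := hAp
  -- A is symmetric
  have hAsym : Aᵀ = A := by
    have h := hPSD.isHermitian
    ext i j
    simpa using congrFun (congrFun h (Sum.inl i)) (Sum.inl j)
  -- kernel inclusion : ker A ⊆ ker Bᵀ
  obtain ⟨N, hN⟩ : ∃ N : Matrix (Fin p ⊕ Fin q) (Fin p ⊕ Fin q) ℝ,
      fromBlocks A B Bᵀ C' = Nᴴ * N := by
    open scoped MatrixOrder in
    obtain ⟨N, hN⟩ := CStarAlgebra.nonneg_iff_eq_star_mul_self.mp hPSD.nonneg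
    exact ⟨N, hN⟩
  have hNH : Nᴴ = Nᵀ := by ext i j; simp
  have hker : ∀ x : Fin p → ℝ, A *ᵥ x = 0 → Bᵀ *ᵥ x = 0 := by
    intro x hx
    set u : Fin p ⊕ Fin q → ℝ := Sum.elim x 0 with hu
    have hMu : (fromBlocks A B Bᵀ C') *ᵥ u = Sum.elim (0 : Fin p → ℝ) (Bᵀ *ᵥ x) := by
      simp [hu, fromBlocks_mulVec, hx]
    have hquad : u ⬝ᵥ ((fromBlocks A B Bᵀ C') *ᵥ u) = 0 := by
      rw [hMu, hu]
      simp [dotProduct, Fintype.sum_sum_type]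
    have hNu : N *ᵥ u = 0 := by
      rw [hN, hNH, ← mulVec_mulVec, Matrix.dotProduct_mulVec, Matrix.vecMul_transpose] at hquad
      exact dotProduct_self_eq_zero.mp hquad
    have hMu0 : (fromBlocks A B Bᵀ C') *ᵥ u = 0 := by
      rw [hN, hNH, ← mulVec_mulVec, hNu, mulVec_zero]
    rw [hMu] at hMu0
    ext j
    exact congrFun hMu0 (Sum.inr j)
  -- Bᵀ * Ap * A = Bᵀ
  have hBA : Bᵀ * Ap * A = Bᵀ := by
    have hz : Bᵀ * (1 - Ap * A) = 0 := by
      have hAz : A * (1 - Ap * A) = 0 := by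
        rw [Matrix.mul_sub, Matrix.mul_one, ← Matrix.mul_assoc, h1, sub_self]
      ext i j
      have hcol : A *ᵥ (fun k => (1 - Ap * A) k j) = 0 := by
        ext i'
        have h0 := congrFun (congrFun hAz i') j
        simpa [Matrix.mul_apply, mulVec, dotProduct] using h0
      have hb := congrFun (hker _ hcol) i
      simp only [Matrix.mul_apply, Matrix.zero_apply]
      simpa [mulVec, dotProduct] using hb
    rw [Matrix.mul_sub, Matrix.mul_one, sub_eq_zero] at hz
    rw [Matrix.mul_assoc]
    exact hz.symm
  -- B = A * Apᵀ * B
  have hB : A * Apᵀ * B = B := by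
    have h := congrArg Matrix.transpose hBA
    simpa [Matrix.transpose_mul, hAsym, Matrix.mul_assoc] using h
  have hAApB : A * Ap * B = B := by
    calc A * Ap * B = A * Ap * (A * Apᵀ * B) := by rw [hB]
    _ = A * Ap * A * Apᵀ * B := by simp only [Matrix.mul_assoc]
    _ = A * Apᵀ * B := by rw [h1]
    _ = B := hB
  have hsymB : Bᵀ * Apᵀ * B = Bᵀ * Ap * B := by
    have habs : Bᵀ * Ap * (A * Apᵀ * B) = Bᵀ * Ap * B := by rw [hB]
    rw [← habs, ← Matrix.mul_assoc, ← Matrix.mul_assoc, hBA]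
  -- congruence decomposition
  set S := C' - Bᵀ * Ap * B with hS
  set L : Matrix (Fin p ⊕ Fin q) (Fin p ⊕ Fin q) ℝ :=
    fromBlocks 1 0 (Bᵀ * Ap) 1 with hL
  have hLT : Lᵀ = fromBlocks 1 (Apᵀ * B) 0 1 := by
    rw [hL, fromBlocks_transpose]
    congr 1 <;> simp [Matrix.transpose_mul]
  have hLDL : L * fromBlocks A 0 0 S * Lᵀ = fromBlocks A B Bᵀ C' := by
    rw [hLT, hL, fromBlocks_multiply, fromBlocks_multiply]
    simp only [Matrix.one_mul, Matrix.mul_one, Matrix.zero_mul, Matrix.mul_zero, add_zero,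
      zero_add]
    rw [hBA, ← Matrix.mul_assoc A Apᵀ B, hB, ← Matrix.mul_assoc Bᵀ Apᵀ B, hsymB, hS,
      add_sub_cancel]
  have hdetL : IsUnit L.det := by
    rw [hL, det_fromBlocks_zero₁₂]
    simp
  have hdetLT : IsUnit Lᵀ.det := by rwa [Matrix.det_transpose]
  have hrank : (fromBlocks A B Bᵀ C').rank = (fromBlocks A 0 0 S).rank := by
    rw [← hLDL, Matrix.rank_mul_eq_left_of_isUnit_det Lᵀ (L * fromBlocks A 0 0 S) hdetLT,
      Matrix.rank_mul_eq_right_of_isUnit_det L (fromBlocks A 0 0 S) hdetL]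
  have hranks : A.rank + S.rank ≤ r := by
    rw [← rank_fromBlocks_diag, ← hrank]; exact hM
  rw [hA] at hranks
  have hS0 : S.rank = 0 := by omega
  have hSz : S = 0 := rank_eq_zero_imp hS0
  rw [hS] at hSz
  exact sub_eq_zero.mp hSz

theorem psd_unique_completion_of_rank_eq {p q r : ℕ}
    (A : Matrix (Fin p) (Fin p) ℝ) (B : Matrix (Fin p) (Fin q) ℝ)
    (C : Matrix (Fin q) (Fin q) ℝ)
    (Ap : Matrix (Fin p) (Fin p) ℝ) (hAp : IsMPInv A Ap)
    (hPSD : (fromBlocks A B Bᵀ C).PosSemidef)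
    (hM : (fromBlocks A B Bᵀ C).rank = r) (hA : A.rank = r) :
    C = Bᵀ * Ap * B ∧
      ∀ C' : Matrix (Fin q) (Fin q) ℝ, (fromBlocks A B Bᵀ C').PosSemidef →
        (fromBlocks A B Bᵀ C').rank ≤ r → C' = Bᵀ * Ap * B := by
  exact ⟨key A B C Ap hAp hA hPSD hM.le,
    fun C' h1 h2 => key A B C' Ap hAp hA h1 h2⟩

end Aux
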